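/- For every integer n ≥ 1 define c_n^1 = ∑_{j=⌈(n+1)/2⌉}^{n} [ 2 ∑_{i=n−j+1}^{j} (−1)^{i+j} ( n + 2(n−i)(n−j)/(1+i+j−n) ) / ( (n−j)! (n−i)! (i+j−n)! ) − ( n + 2(n−j)^2/(1+2j−n) ) / ( ((n−j)!)^2 (2j−n)! ) ]. Then for all real a > 0, λ > 0 and ε > 0, the series λ a ∑_{n=1}^∞ c_n^1 (2λε)^{n−1} converges absolutely and equals a ( λ e^{−2λε} − 4 λ^2 ε e^{−4λε} ). (This is the closed form of the variance of the Euler characteristic of the random Rips–Vietoris complex in dimension one.) -/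

import Mathlib

/-- The coefficient `c_n^1` (the `d = 1` case of the coefficients in the series for the
variance of the Euler characteristic):
`c_n^1 = ∑_{j=⌈(n+1)/2⌉}^{n} [ 2 ∑_{i=n−j+1}^{j} (−1)^{i+j} (n + 2(n−i)(n−j)/(1+i+j−n))
/ ((n−j)!(n−i)!(i+j−n)!) − (n + 2(n−j)²/(1+2j−n)) / (((n−j)!)²(2j−n)!) ]`. -/
noncomputable def cCoeff (n : ℕ) : ℝ :=
  ∑ j ∈ Finset.Icc ((n + 2) / 2) n,
    (2 * ∑ i ∈ Finset.Icc (n - j + 1) j,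
        (-1 : ℝ) ^ (i + j)
          * ((n : ℝ) + 2 * ((n - i : ℕ) : ℝ) * ((n - j : ℕ) : ℝ) / ((1 + i + j - n : ℕ) : ℝ))
          / ((Nat.factorial (n - j) : ℝ) * (Nat.factorial (n - i) : ℝ)
              * (Nat.factorial (i + j - n) : ℝ))
      - ((n : ℝ) + 2 * ((n - j : ℕ) : ℝ) ^ 2 / ((1 + 2 * j - n : ℕ) : ℝ))
          / ((Nat.factorial (n - j) : ℝ) ^ 2 * (Nat.factorial (2 * j - n) : ℝ)))

open Finset

noncomputable def gg (n k l : ℕ) : ℝ :=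
  (-1:ℝ)^(k+l) * ((n:ℝ) + 2*(l:ℝ)*(k:ℝ)/((n - (k+l) + 1 : ℕ):ℝ)) /
    ((Nat.factorial k : ℝ) * (Nat.factorial l) * (Nat.factorial (n - (k+l))))


lemma gg_symm (n k l : ℕ) : gg n k l = gg n l k := by
  simp only [gg, add_comm l k]; ring


lemma binom1r (m : ℕ) :
    ∑ k ∈ range (m+1), (1:ℝ)/(Nat.factorial k * Nat.factorial (m-k)) = 2^m / Nat.factorial m := by
  have h : ∀ k ∈ range (m+1), (1:ℝ)/(Nat.factorial k * Nat.factorial (m-k))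
      = (m.choose k : ℝ) / Nat.factorial m := by
    intro k hk
    rw [mem_range] at hk
    have hkm : k ≤ m := by omega
    have := Nat.choose_mul_factorial_mul_factorial hkm
    have hc : (m.choose k : ℝ) * (Nat.factorial k * Nat.factorial (m-k)) = Nat.factorial m := by
      push_cast [← this]; ring
    have h1 : (Nat.factorial k : ℝ) * Nat.factorial (m-k) ≠ 0 := by
      positivity
    have h2 : (Nat.factorial m : ℝ) ≠ 0 := by positivity
    field_simp
    linarith [hc]
  rw [Finset.sum_congr rfl h, ← Finset.sum_div]
  congr 1
  rw [← Nat.cast_sum, Nat.sum_range_choose]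
  push_cast; ring

lemma binom1 (m : ℕ) :
    ∑ p ∈ antidiagonal m, (1:ℝ)/(Nat.factorial p.1 * Nat.factorial p.2)
      = 2^m / Nat.factorial m := by
  rw [Finset.Nat.sum_antidiagonal_eq_sum_range_succ_mk]
  exact binom1r m

lemma binom2 (m : ℕ) :
    ∑ p ∈ antidiagonal m, (p.1:ℝ)*(p.2:ℝ)/(Nat.factorial p.1 * Nat.factorial p.2)
      = if 2 ≤ m then (2:ℝ)^(m-2) / (Nat.factorial (m-2) : ℝ) else 0 := by
  match m with
  | 0 => simp [Finset.Nat.antidiagonal_zero]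
  | 1 =>
    rw [Finset.Nat.sum_antidiagonal_eq_sum_range_succ_mk]
    simp [Finset.sum_range_succ]
  | (N+2) =>
    rw [Finset.Nat.sum_antidiagonal_eq_sum_range_succ_mk]
    have h2 : 2 ≤ N + 2 := by omega
    rw [if_pos h2]
    have : N + 2 - 2 = N := by omega
    rw [this]
    rw [Finset.sum_range_succ, Finset.sum_range_succ']
    have hlast : ((N+2:ℕ):ℝ) * ((N+2-(N+2):ℕ):ℝ) / (Nat.factorial (N+2) * Nat.factorial (N+2-(N+2))) = 0 := by
      simp
    have hfirst : ((0:ℕ):ℝ) * ((N+2-0:ℕ):ℝ) / (Nat.factorial 0 * Nat.factorial (N+2-0)) = 0 := by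
      simp
    rw [hlast, hfirst, add_zero, add_zero]
    rw [← binom1r N]
    apply Finset.sum_congr rfl

    intro k hk
    rw [mem_range] at hk
    have hkN : k ≤ N := by omega
    dsimp only
    have e1 : N + 2 - (k+1) = (N - k) + 1 := by omega
    rw [e1, Nat.factorial_succ k, Nat.factorial_succ (N-k)]
    push_cast [Nat.cast_sub hkN]
    have hk1 : ((k:ℝ)+1) ≠ 0 := by positivity
    have hNk : ((N:ℝ) - k + 1) ≠ 0 := by
      have : (k:ℝ) ≤ N := by exact_mod_cast hkN
      linarith
    have hkf : (Nat.factorial k : ℝ) ≠ 0 := by positivity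
    have hNkf : (Nat.factorial (N-k) : ℝ) ≠ 0 := by positivity
    field_simp

lemma antidiag_eval (n m : ℕ) (hm : m < n) :
    ∑ p ∈ antidiagonal m, gg n p.1 p.2
      = ((-1:ℝ)^m * (n:ℝ) / Nat.factorial (n-m)) * ((2:ℝ)^m / Nat.factorial m)
        + ((-1:ℝ)^m * 2 / (((n-m+1:ℕ):ℝ) * Nat.factorial (n-m)))
            * (if 2 ≤ m then (2:ℝ)^(m-2)/(Nat.factorial (m-2):ℝ) else 0) := by
  have hc : ((n-m+1:ℕ):ℝ) ≠ 0 := Nat.cast_ne_zero.mpr (by omega)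
  have hd : (Nat.factorial (n-m):ℝ) ≠ 0 := by positivity
  rw [← binom1 m, ← binom2 m, Finset.mul_sum, Finset.mul_sum, ← Finset.sum_add_distrib]
  apply Finset.sum_congr rfl
  intro p hp
  have hp' : p.1 + p.2 = m := Finset.HasAntidiagonal.mem_antidiagonal.mp hp
  have h1 : (Nat.factorial p.1 : ℝ) ≠ 0 := by positivity
  have h2 : (Nat.factorial p.2 : ℝ) ≠ 0 := by positivity
  rw [gg, hp']
  field_simp


lemma tri (n : ℕ) (hn : 1 ≤ n) (h : ℕ → ℕ → ℝ) (hsym : ∀ k l, h k l = h l k) :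
    ∑ k ∈ range ((n-1)/2+1), (2 * ∑ l ∈ Icc k (n-1-k), h k l - h k k)
      = ∑ m ∈ range n, ∑ p ∈ antidiagonal m, h p.1 p.2 := by
  set T : Finset (ℕ×ℕ) := (range n ×ˢ range n).filter (fun p => p.1+p.2 < n) with hT
  have memT : ∀ p : ℕ×ℕ, p ∈ T ↔ p.1+p.2 < n := by
    intro p; simp only [hT, Finset.mem_filter, Finset.mem_product, Finset.mem_range]
    omega
  -- RHS as a sum over T
  have hR : ∑ m ∈ range n, ∑ p ∈ antidiagonal m, h p.1 p.2 = ∑ p ∈ T, h p.1 p.2 := by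
    rw [Finset.sum_sigma' (range n) (fun m => antidiagonal m) (fun _ p => h p.1 p.2)]
    apply Finset.sum_nbij' (fun x => x.2) (fun p => ⟨p.1+p.2, p⟩)
    · intro x hx
      rw [Finset.mem_sigma] at hx
      rw [memT, Finset.HasAntidiagonal.mem_antidiagonal.mp hx.2]
      exact Finset.mem_range.mp hx.1
    · intro p hp
      rw [Finset.mem_sigma]
      exact ⟨Finset.mem_range.mpr ((memT p).mp hp), Finset.HasAntidiagonal.mem_antidiagonal.mpr rfl⟩
    · intro x hx
      rw [Finset.mem_sigma] at hx
      have := Finset.HasAntidiagonal.mem_antidiagonal.mp hx.2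
      exact Sigma.ext this (heq_of_eq rfl)
    · intro p _; rfl
    · intro x _; rfl
  -- upper triangle
  have hup : ∑ k ∈ range ((n-1)/2+1), ∑ l ∈ Icc k (n-1-k), h k l
      = ∑ p ∈ T.filter (fun p => p.1 ≤ p.2), h p.1 p.2 := by
    rw [Finset.sum_sigma' (range ((n-1)/2+1)) (fun k => Icc k (n-1-k)) (fun k l => h k l)]
    apply Finset.sum_nbij' (fun x => (x.1, x.2)) (fun p => ⟨p.1, p.2⟩)
    · intro x hx
      rw [Finset.mem_sigma, Finset.mem_range, Finset.mem_Icc] at hx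
      rw [Finset.mem_filter, memT]
      constructor
      · omega
      · exact hx.2.1
    · intro p hp
      rw [Finset.mem_filter, memT] at hp
      rw [Finset.mem_sigma, Finset.mem_range, Finset.mem_Icc]
      dsimp only
      omega
    · intro x _; rfl
    · intro p _; rfl
    · intro x _; rfl
  -- diagonal
  have hdiag : ∑ k ∈ range ((n-1)/2+1), h k k
      = ∑ p ∈ T.filter (fun p => p.1 = p.2), h p.1 p.2 := by
    apply Finset.sum_nbij' (fun k => (k,k)) (fun p => p.1)
    · intro k hk
      rw [Finset.mem_range] at hk
      rw [Finset.mem_filter, memT]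
      exact ⟨by omega, rfl⟩
    · intro p hp
      rw [Finset.mem_filter, memT] at hp
      rw [Finset.mem_range]
      omega
    · intro k _; rfl
    · intro p hp
      rw [Finset.mem_filter] at hp
      exact Prod.ext rfl hp.2
    · intro k _; rfl
  -- strict lower equals strict upper
  have hswap : ∑ p ∈ T.filter (fun p => ¬ p.1 ≤ p.2), h p.1 p.2
      = ∑ p ∈ T.filter (fun p => p.1 < p.2), h p.1 p.2 := by
    apply Finset.sum_nbij' (fun p => (p.2, p.1)) (fun p => (p.2, p.1))
    · intro p hp
      rw [Finset.mem_filter, memT] at hp ⊢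
      constructor
      · omega
      · simp; omega
    · intro p hp
      rw [Finset.mem_filter, memT] at hp ⊢
      constructor
      · omega
      · simp; omega
    · intro p _; rfl
    · intro p _; rfl
    · intro p _; exact hsym p.1 p.2
  -- upper = strict upper + diagonal
  have hsplitup : ∑ p ∈ T.filter (fun p => p.1 ≤ p.2), h p.1 p.2
      = ∑ p ∈ T.filter (fun p => p.1 < p.2), h p.1 p.2
        + ∑ p ∈ T.filter (fun p => p.1 = p.2), h p.1 p.2 := by
    have e1 : (T.filter (fun p => p.1 ≤ p.2)).filter (fun p => p.1 < p.2)
        = T.filter (fun p => p.1 < p.2) := by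
      ext p
      simp only [Finset.mem_filter]
      constructor
      · rintro ⟨⟨hT', h1⟩, h2⟩; exact ⟨hT', h2⟩
      · rintro ⟨hT', h1⟩; exact ⟨⟨hT', by omega⟩, h1⟩
    have e2 : (T.filter (fun p => p.1 ≤ p.2)).filter (fun p => ¬ p.1 < p.2)
        = T.filter (fun p => p.1 = p.2) := by
      ext p
      simp only [Finset.mem_filter]
      constructor
      · rintro ⟨⟨hT', h1⟩, h2⟩; exact ⟨hT', by omega⟩
      · rintro ⟨hT', h1⟩; exact ⟨⟨hT', by omega⟩, by omega⟩
    rw [← Finset.sum_filter_add_sum_filter_not (T.filter (fun p => p.1 ≤ p.2))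
      (fun p => p.1 < p.2), e1, e2]
  have hTsplit : ∑ p ∈ T, h p.1 p.2
      = ∑ p ∈ T.filter (fun p => p.1 ≤ p.2), h p.1 p.2
        + ∑ p ∈ T.filter (fun p => ¬ p.1 ≤ p.2), h p.1 p.2 :=
    (Finset.sum_filter_add_sum_filter_not T _ _).symm
  rw [Finset.sum_sub_distrib, ← Finset.mul_sum, hup, hdiag, hR, hTsplit, hswap, hsplitup]
  ring


lemma alt_binom (N : ℕ) :
    ∑ m ∈ range (N+1), (-2:ℝ)^m / (Nat.factorial m * Nat.factorial (N-m))
      = (-1:ℝ)^N / Nat.factorial N := by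
  have key : ∑ m ∈ range (N+1), (-2:ℝ)^m * (N.choose m : ℝ) = (-1:ℝ)^N := by
    calc ∑ m ∈ range (N+1), (-2:ℝ)^m * (N.choose m : ℝ)
        = ((-2:ℝ) + 1)^N := by
          rw [add_pow]
          apply Finset.sum_congr rfl
          intro m _
          rw [one_pow, mul_one]
      _ = (-1:ℝ)^N := by norm_num
  have h : ∀ m ∈ range (N+1), (-2:ℝ)^m / (Nat.factorial m * Nat.factorial (N-m))
      = ((-2:ℝ)^m * (N.choose m : ℝ)) / Nat.factorial N := by
    intro m hm
    rw [mem_range] at hm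
    have hmN : m ≤ N := by omega
    have hc : (N.choose m : ℝ) * (Nat.factorial m * Nat.factorial (N-m)) = Nat.factorial N := by
      rw [← Nat.choose_mul_factorial_mul_factorial hmN]; push_cast; ring
    have h1 : (Nat.factorial m : ℝ) * Nat.factorial (N-m) ≠ 0 := by positivity
    have h2 : (Nat.factorial N : ℝ) ≠ 0 := by positivity
    field_simp
    rw [← hc]; ring
  rw [Finset.sum_congr rfl h, ← Finset.sum_div, key]

lemma exp_tsum (y : ℝ) : ∑' n : ℕ, y ^ n / Nat.factorial n = Real.exp y := by
  rw [Real.exp_eq_exp_ℝ, NormedSpace.exp_eq_tsum_div]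

lemma summable_mul_pow (y : ℝ) :
    Summable (fun n : ℕ => (n:ℝ) * y^n / Nat.factorial n) := by
  rw [← summable_nat_add_iff 1]
  have h : (fun n : ℕ => ((n+1:ℕ):ℝ) * y^(n+1) / Nat.factorial (n+1))
      = fun n : ℕ => y * (y^n / Nat.factorial n) := by
    funext n
    rw [Nat.factorial_succ]
    have h1 : ((n:ℝ)+1) ≠ 0 := by positivity
    have h2 : (Nat.factorial n : ℝ) ≠ 0 := by positivity
    push_cast
    field_simp
    ring
  rw [h]
  exact (Real.summable_pow_div_factorial y).mul_left y

lemma tsum_mul_pow (y : ℝ) :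
    ∑' n : ℕ, (n:ℝ) * y^n / Nat.factorial n = y * Real.exp y := by
  rw [Summable.tsum_eq_zero_add (summable_mul_pow y)]
  have h : (fun n : ℕ => ((n+1:ℕ):ℝ) * y^(n+1) / Nat.factorial (n+1))
      = fun n : ℕ => y * (y^n / Nat.factorial n) := by
    funext n
    rw [Nat.factorial_succ]
    have h1 : ((n:ℝ)+1) ≠ 0 := by positivity
    have h2 : (Nat.factorial n : ℝ) ≠ 0 := by positivity
    push_cast
    field_simp
    ring
  simp only [h]
  rw [tsum_mul_left, exp_tsum]
  norm_num


lemma step1 (n : ℕ) (hn : 1 ≤ n) :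
    cCoeff n = ∑ k ∈ range ((n-1)/2+1), (2 * ∑ l ∈ Icc k (n-1-k), gg n k l - gg n k k) := by
  rw [cCoeff]
  apply Finset.sum_nbij' (fun j => n - j) (fun k => n - k)
  · intro j hj; rw [mem_Icc] at hj; rw [mem_range]; omega
  · intro k hk; rw [mem_range] at hk; rw [mem_Icc]; omega
  · intro j hj; rw [mem_Icc] at hj; omega
  · intro k hk; rw [mem_range] at hk; omega
  · intro j hj
    rw [mem_Icc] at hj
    obtain ⟨hj1, hj2⟩ := hj
    congr 1
    · congr 1
      apply Finset.sum_nbij' (fun i => n - i) (fun l => n - l)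
      · intro i hi; rw [mem_Icc] at hi ⊢; omega
      · intro l hl; rw [mem_Icc] at hl ⊢; omega
      · intro i hi; rw [mem_Icc] at hi; omega
      · intro l hl; rw [mem_Icc] at hl; omega
      · intro i hi
        rw [mem_Icc] at hi
        obtain ⟨hi1, hi2⟩ := hi
        rw [gg]
        rw [show n - ((n-j)+(n-i)) + 1 = 1+i+j-n from by omega,
          show n - ((n-j)+(n-i)) = i+j-n from by omega,
          show (-1:ℝ)^((n-j)+(n-i)) = (-1:ℝ)^(i+j) from by
            rw [neg_one_pow_eq_pow_mod_two, neg_one_pow_eq_pow_mod_two (n := i+j)]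
            congr 1; omega]
    · rw [gg]
      rw [show n - ((n-j)+(n-j)) + 1 = 1+2*j-n from by omega,
        show n - ((n-j)+(n-j)) = 2*j-n from by omega,
        show (-1:ℝ)^((n-j)+(n-j)) = 1 from Even.neg_one_pow ⟨n-j, rfl⟩]
      ring


lemma cCoeff_eq_sum (n : ℕ) :
    cCoeff (n+1) = ∑ m ∈ range (n+1),
      ( ((-1:ℝ)^m * ((n+1:ℕ):ℝ) / Nat.factorial (n+1-m)) * ((2:ℝ)^m / Nat.factorial m)
        + ((-1:ℝ)^m * 2 / (((n+1-m+1:ℕ):ℝ) * (Nat.factorial (n+1-m):ℝ)))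
            * (if 2 ≤ m then (2:ℝ)^(m-2)/((Nat.factorial (m-2)):ℝ) else 0) ) := by
  rw [step1 (n+1) (by omega)]
  have ht := tri (n+1) (by omega) (gg (n+1)) (fun k l => gg_symm (n+1) k l)
  simp only [Nat.add_sub_cancel] at ht ⊢
  rw [ht]
  apply Finset.sum_congr rfl
  intro m hm
  exact antidiag_eval (n+1) m (mem_range.mp hm)


lemma cCoeff_closed (n : ℕ) :
    cCoeff (n+1) = (-1:ℝ)^n * (1 + (n:ℝ) * 2^n) / Nat.factorial n := by
  have hSA : ∀ N : ℕ, ∑ m ∈ range (N+1), ((-1:ℝ)^m * ((N+1:ℕ):ℝ) / Nat.factorial (N+1-m)) * ((2:ℝ)^m / Nat.factorial m)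
      = ((N:ℝ)+1) * ((-1:ℝ)^(N+1)/Nat.factorial (N+1) - (-2:ℝ)^(N+1)/Nat.factorial (N+1)) := by
    intro N
    have h1 : ∑ m ∈ range (N+2), (-2:ℝ)^m/(Nat.factorial m * Nat.factorial (N+1-m))
        = (-1:ℝ)^(N+1)/Nat.factorial (N+1) := alt_binom (N+1)
    rw [Finset.sum_range_succ] at h1
    have e : N+1-(N+1) = 0 := by omega
    rw [e, Nat.factorial_zero] at h1
    have h2 : ∑ m ∈ range (N+1), (-2:ℝ)^m/(Nat.factorial m * Nat.factorial (N+1-m))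
        = (-1:ℝ)^(N+1)/Nat.factorial (N+1) - (-2:ℝ)^(N+1)/Nat.factorial (N+1) := by
      norm_num at h1; linarith
    calc ∑ m ∈ range (N+1), ((-1:ℝ)^m * ((N+1:ℕ):ℝ) / Nat.factorial (N+1-m)) * ((2:ℝ)^m / Nat.factorial m)
        = ((N:ℝ)+1) * ∑ m ∈ range (N+1), (-2:ℝ)^m/(Nat.factorial m * Nat.factorial (N+1-m)) := by
          rw [Finset.mul_sum]
          apply Finset.sum_congr rfl
          intro m _
          have : (-2:ℝ)^m = (-1:ℝ)^m * 2^m := by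
            rw [← neg_one_mul, mul_pow]
          rw [this]
          push_cast
          have hf1 : (Nat.factorial (N+1-m) : ℝ) ≠ 0 := by positivity
          have hf2 : (Nat.factorial m : ℝ) ≠ 0 := by positivity
          field_simp
      _ = ((N:ℝ)+1) * ((-1:ℝ)^(N+1)/Nat.factorial (N+1) - (-2:ℝ)^(N+1)/Nat.factorial (N+1)) := by
          rw [h2]
  match n with
  | 0 =>
    rw [cCoeff_eq_sum]
    norm_num [Finset.sum_range_succ]
  | 1 =>
    rw [cCoeff_eq_sum]
    norm_num [Finset.sum_range_succ, Nat.factorial]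
  | (M+2) =>
    rw [cCoeff_eq_sum, Finset.sum_add_distrib, hSA (M+2)]
    have hSB : ∑ m ∈ range (M+3),
        ((-1:ℝ)^m * 2 / (((M+2+1-m+1:ℕ):ℝ) * (Nat.factorial (M+2+1-m):ℝ)))
            * (if 2 ≤ m then (2:ℝ)^(m-2)/((Nat.factorial (m-2)):ℝ) else 0)
        = 2 * ∑ t ∈ range (M+1), (-2:ℝ)^t/(Nat.factorial t * Nat.factorial (M+2-t)) := by
      rw [Finset.sum_range_succ', Finset.sum_range_succ']
      norm_num
      rw [Finset.mul_sum]
      apply Finset.sum_congr rfl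
      intro t ht
      rw [mem_range] at ht
      have e2 : M + 2 + 1 - (t+1+1) = M + 1 - t := by omega
      have e4 : t+1+1-2 = t := by omega
      have e6 : (-1:ℝ)^(t+1+1) = (-1:ℝ)^t := by
        rw [pow_succ, pow_succ]; ring
      have e7 : (-2:ℝ)^t = (-1:ℝ)^t * 2^t := by
        rw [← neg_one_mul, mul_pow]
      rw [e2, e4, e6, e7]
      have e5 : M + 2 - t = (M + 1 - t) + 1 := by omega
      rw [e5, Nat.factorial_succ]
      have hf1 : (Nat.factorial (M+1-t) : ℝ) ≠ 0 := by positivity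
      have hf2 : (Nat.factorial t : ℝ) ≠ 0 := by positivity
      have hc : ((M+1-t:ℕ):ℝ) + 1 ≠ 0 := by positivity
      push_cast
      field_simp
    rw [hSB]
    have h3 : ∑ t ∈ range (M+3), (-2:ℝ)^t/(Nat.factorial t * Nat.factorial (M+2-t))
        = (-1:ℝ)^(M+2)/Nat.factorial (M+2) := alt_binom (M+2)
    rw [Finset.sum_range_succ, Finset.sum_range_succ] at h3
    have e8 : M+2-(M+2) = 0 := by omega
    have e9 : M+2-(M+1) = 1 := by omega
    rw [e8, e9] at h3
    have h4 : ∑ t ∈ range (M+1), (-2:ℝ)^t/(Nat.factorial t * Nat.factorial (M+2-t))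
        = (-1:ℝ)^(M+2)/Nat.factorial (M+2)
          - (-2:ℝ)^(M+1)/(Nat.factorial (M+1))
          - (-2:ℝ)^(M+2)/(Nat.factorial (M+2)) := by
      simp only [Nat.factorial_zero, Nat.factorial_one, Nat.cast_one, mul_one] at h3
      linarith
    rw [h4]
    have hfM : (Nat.factorial M : ℝ) ≠ 0 := by positivity
    have hM1 : ((M:ℝ)+1) ≠ 0 := by positivity
    have hM2 : ((M:ℝ)+2) ≠ 0 := by positivity
    have hM3 : ((M:ℝ)+3) ≠ 0 := by positivity
    simp only [Nat.factorial_succ, pow_succ]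
    push_cast
    have e7 : (-2:ℝ)^M = (-1:ℝ)^M * 2^M := by
      rw [← neg_one_mul, mul_pow]
    rw [e7]
    field_simp
    ring


/-- Variance of the Euler characteristic in dimension one: for all
`a, λ, ε > 0`, the series `λ a ∑_{n≥1} c_n^1 (2λε)^{n−1}` converges absolutely and
equals `a (λ e^{−2λε} − 4λ²ε e^{−4λε})`. -/
theorem variance_euler_characteristic_dim_one
    (a lam ε : ℝ) (ha : 0 < a) (hlam : 0 < lam) (hε : 0 < ε) :
    Summable (fun n : ℕ => |cCoeff (n + 1) * (2 * lam * ε) ^ n|) ∧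
    lam * a * ∑' n : ℕ, cCoeff (n + 1) * (2 * lam * ε) ^ n
      = a * (lam * Real.exp (-(2 * lam * ε)) - 4 * lam ^ 2 * ε * Real.exp (-(4 * lam * ε))) := by
  set x : ℝ := 2 * lam * ε with hx
  have hterm : (fun n : ℕ => cCoeff (n + 1) * x ^ n)
      = fun n : ℕ => (-x)^n / Nat.factorial n + (n:ℝ) * (-(2*x))^n / Nat.factorial n := by
    funext n
    rw [cCoeff_closed]
    have h1 : (-x)^n = (-1:ℝ)^n * x^n := by rw [← neg_one_mul, mul_pow]
    have h2 : (-(2*x))^n = (-1:ℝ)^n * (2^n * x^n) := by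
      rw [← neg_one_mul (2*x), mul_pow, mul_pow]
    rw [h1, h2]
    have h3 : (Nat.factorial n : ℝ) ≠ 0 := by positivity
    field_simp
  have hf : Summable (fun n : ℕ => (-x)^n / (Nat.factorial n : ℝ)) :=
    Real.summable_pow_div_factorial (-x)
  have hg : Summable (fun n : ℕ => (n:ℝ) * (-(2*x))^n / Nat.factorial n) :=
    summable_mul_pow (-(2*x))
  have hsum : Summable (fun n : ℕ => cCoeff (n + 1) * x ^ n) := by
    rw [hterm]; exact hf.add hg
  constructor
  · exact hsum.abs
  · rw [hterm, Summable.tsum_add hf hg, tsum_mul_pow (-(2*x)), exp_tsum (-x)]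
    rw [show -(2*x) = -(4 * lam * ε) by rw [hx]; ring]
    rw [show -x = -(2 * lam * ε) by rw [hx]]
    ring
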